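/- Let p be a symmetric near-separated polynomial, i.e. p(x,y) = r(x)s(y) − s(x)r(y) for some non-associated non-constant polynomials r, s ∈ K[x₁,…,xₙ], and suppose α ∈ Kⁿ satisfies p(x₁,…,xₙ,α) ≠ 0 (as a polynomial in x). Then there exists another symmetric near-separated representation (r', s') of p (i.e. p(x,y) = r'(x)s'(y) − s'(x)r'(y)) with r'(α) = 0 and s'(α) = 1. -/

import Mathlib

open MvPolynomial

/-- If `p(x,y) = r(x)s(y) − s(x)r(y)` is a symmetric near-separated
polynomial and `α ∈ Kⁿ` satisfies `p(x,α) ≠ 0`, then `p` has a symmetric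
near-separated representation `(r',s')` with `r'(α) = 0` and `s'(α) = 1`. -/
theorem symmetric_near_separated_normalized_representation
    {K : Type*} [Field K] {n : ℕ}
    (r s : MvPolynomial (Fin n) K)
    (hr : 0 < r.totalDegree) (hs : 0 < s.totalDegree)
    (hna : ¬ Associated r s)
    (p : MvPolynomial (Fin n ⊕ Fin n) K)
    (hp : p = rename Sum.inl r * rename Sum.inr s - rename Sum.inl s * rename Sum.inr r)
    (α : Fin n → K)
    (hα : aeval (Sum.elim X (fun i => C (α i))) p ≠ (0 : MvPolynomial (Fin n) K)) :
    ∃ r' s' : MvPolynomial (Fin n) K,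
      p = rename Sum.inl r' * rename Sum.inr s' - rename Sum.inl s' * rename Sum.inr r' ∧
      eval α r' = 0 ∧ eval α s' = 1 := by
  set a : K := eval α r with ha
  set b : K := eval α s with hb
  have hab : a ≠ 0 ∨ b ≠ 0 := by
    by_contra h
    push_neg at h
    apply hα
    subst hp
    have key : ∀ q : MvPolynomial (Fin n) K,
        aeval (Sum.elim X (fun i => C (α i))) (rename (Sum.inr : Fin n → Fin n ⊕ Fin n) q)
          = (C (eval α q) : MvPolynomial (Fin n) K) := by
      intro q
      rw [aeval_rename]
      rw [show (Sum.elim X (fun i => C (α i)) ∘ Sum.inr : Fin n → MvPolynomial (Fin n) K)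
        = fun i => C (α i) from rfl]
      induction q using MvPolynomial.induction_on with
      | C c => simp
      | add p q hp hq => rw [map_add, hp, hq, eval_add, map_add]
      | mul_X p i hp => rw [map_mul, hp, aeval_X, eval_mul, eval_X, map_mul]
    simp only [map_sub, map_mul, key]
    rw [← ha, ← hb, h.1, h.2]
    simp
  obtain ⟨c, d, hcd⟩ : ∃ c d : K, a * c + b * d = 1 := by
    rcases hab with h | h
    · exact ⟨a⁻¹, 0, by field_simp; ring⟩
    · exact ⟨0, b⁻¹, by field_simp; ring⟩
  refine ⟨C b * r - C a * s, C c * r + C d * s, ?_, ?_, ?_⟩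
  · subst hp
    simp only [map_sub, map_add, map_mul, rename_C]
    have h1 : (C (a * c + b * d) : MvPolynomial (Fin n ⊕ Fin n) K) = 1 := by
      rw [hcd, map_one]
    linear_combination (C a * C c + C b * C d - 1 : MvPolynomial (Fin n ⊕ Fin n) K) *
      (rename Sum.inl r * rename Sum.inr s - rename Sum.inl s * rename Sum.inr r) -
      (rename Sum.inl r * rename Sum.inr s - rename Sum.inl s * rename Sum.inr r) *
        (map_mul (C : K →+* MvPolynomial (Fin n ⊕ Fin n) K) a c ▸ map_mul (C : K →+* MvPolynomial (Fin n ⊕ Fin n) K) b d ▸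
          map_add (C : K →+* MvPolynomial (Fin n ⊕ Fin n) K) (a*c) (b*d) ▸ h1 : (C a * C c + C b * C d : MvPolynomial (Fin n ⊕ Fin n) K) = 1)
  · simp only [map_sub, map_mul, eval_C, ← ha, ← hb]
    ring
  · simp only [map_add, map_mul, eval_C, ← ha, ← hb]
    linear_combination hcd
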